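/- For every real d ≥ 0, ∫_0^∞ (1 + x^d)/(1 + x^{d+2}) dx = 2·Γ((1+d)/(2+d))·Γ((3+d)/(2+d)), where Γ denotes the Gamma function. -/

import Mathlib

open Set MeasureTheory

lemma real_beta (a : ℝ) (h0 : 0 < a) (h1 : a < 1) :
    ∫ t in (0:ℝ)..1, t ^ (a - 1) * (1 - t) ^ (-a) = Real.Gamma a * Real.Gamma (1 - a) := by
  have hre : 0 < (a : ℂ).re := by simpa using h0
  have hre' : 0 < ((1 : ℂ) - a).re := by simp [h1]
  have hbeta := Complex.Gamma_mul_Gamma_eq_betaIntegral hre hre'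
  rw [show (a : ℂ) + (1 - a) = 1 by ring, Complex.Gamma_one, one_mul] at hbeta
  have key : ((∫ t in (0:ℝ)..1, t ^ (a - 1) * (1 - t) ^ (-a) : ℝ) : ℂ)
      = Complex.betaIntegral a (1 - a) := by
    rw [Complex.betaIntegral, ← intervalIntegral.integral_ofReal]
    apply intervalIntegral.integral_congr
    intro t ht
    rw [uIcc_of_le (by norm_num)] at ht
    push_cast
    rw [Complex.ofReal_cpow ht.1, Complex.ofReal_cpow (by linarith [ht.2] : (0:ℝ) ≤ 1 - t)]
    push_cast
    ring_nf
  have h2 := key.trans hbeta.symm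
  rw [show ((1:ℂ) - a) = ((1 - a : ℝ) : ℂ) by push_cast; ring,
    Complex.Gamma_ofReal, Complex.Gamma_ofReal, ← Complex.ofReal_mul] at h2
  exact_mod_cast h2

lemma beta_Ioi (a : ℝ) (h0 : 0 < a) (h1 : a < 1) :
    ∫ x in Ioi (0:ℝ), x ^ (a - 1) / (1 + x) = Real.Gamma a * Real.Gamma (1 - a) := by
  have himg : (fun t : ℝ => t / (1 - t)) '' Ioo 0 1 = Ioi 0 := by
    ext y
    constructor
    · rintro ⟨t, ⟨ht0, ht1⟩, rfl⟩
      exact div_pos ht0 (by linarith)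
    · intro hy
      simp only [mem_Ioi] at hy
      refine ⟨y / (1 + y), ⟨by positivity, by rw [div_lt_one (by linarith)]; linarith⟩, ?_⟩
      have h1 : (1:ℝ) + y ≠ 0 := by positivity
      field_simp
      ring
  have hderiv : ∀ t ∈ Ioo (0:ℝ) 1,
      HasDerivWithinAt (fun t : ℝ => t / (1 - t)) (1 / (1 - t) ^ 2) (Ioo 0 1) t := by
    intro t ht
    have hne : (1:ℝ) - t ≠ 0 := by simp only [mem_Ioo] at ht; intro h; linarith [ht.2]
    have := (hasDerivAt_id t).div ((hasDerivAt_const t 1).sub (hasDerivAt_id t)) hne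
    refine this.hasDerivWithinAt.congr_deriv ?_
    simp only [Pi.sub_apply, id]
    ring
  have hinj : InjOn (fun t : ℝ => t / (1 - t)) (Ioo 0 1) := by
    intro t1 ht1 t2 ht2 h
    simp only [mem_Ioo] at ht1 ht2
    have h1 : (1:ℝ) - t1 ≠ 0 := by intro h'; linarith [ht1.2]
    have h2 : (1:ℝ) - t2 ≠ 0 := by intro h'; linarith [ht2.2]
    field_simp at h
    linarith
  rw [← himg, integral_image_eq_integral_abs_deriv_smul measurableSet_Ioo hderiv hinj]
  rw [show (∫ t in Ioo (0:ℝ) 1, |1 / (1 - t) ^ 2| •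
        ((t / (1 - t)) ^ (a - 1) / (1 + t / (1 - t))))
      = ∫ t in Ioo (0:ℝ) 1, t ^ (a - 1) * (1 - t) ^ (-a) from ?_,
    ← MeasureTheory.integral_Ioc_eq_integral_Ioo,
    ← intervalIntegral.integral_of_le (by norm_num : (0:ℝ) ≤ 1), real_beta a h0 h1]
  apply setIntegral_congr_fun measurableSet_Ioo
  intro t ht
  simp only [mem_Ioo] at ht
  obtain ⟨ht0, ht1⟩ := ht
  have h1t : (0:ℝ) < 1 - t := by linarith
  have h1x : 1 + t / (1 - t) = 1 / (1 - t) := by field_simp; ring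
  simp only []
  rw [smul_eq_mul, h1x, abs_of_pos (by positivity), Real.div_rpow ht0.le h1t.le]
  have e1 : ((1:ℝ) - t) ^ 2 * ((1 - t) ^ (a - 1) * (1 - t) ^ (-a)) = 1 - t := by
    rw [← Real.rpow_add h1t, show a - 1 + -a = -1 by ring, Real.rpow_neg_one]
    field_simp
  have hb1 : ((1:ℝ) - t) ^ (a - 1) ≠ 0 := by positivity
  field_simp
  have e2 : ((1:ℝ) - t) * ((1 - t) ^ (a - 1) * (1 - t) ^ (-a)) = 1 := by
    apply mul_left_cancel₀ h1t.ne'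
    linear_combination e1
  linear_combination -e2

lemma integrableOn_aux (s p : ℝ) (hs : 0 < s) (hsp : s < p) :
    IntegrableOn (fun x : ℝ => x ^ (s - 1) / (1 + x ^ p)) (Ioi 0) := by
  have hcont : ContinuousOn (fun x : ℝ => x ^ (s - 1) / (1 + x ^ p)) (Ioi 0) := by
    apply ContinuousOn.div
    · exact continuousOn_id.rpow_const fun x hx => Or.inl (ne_of_gt hx)
    · exact continuousOn_const.add (continuousOn_id.rpow_const fun x hx => Or.inl (ne_of_gt hx))
    · intro x hx
      have hx0 : (0:ℝ) < x := hx
      positivity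
  rw [← Ioc_union_Ioi_eq_Ioi (by norm_num : (0:ℝ) ≤ 1)]
  apply IntegrableOn.union
  · have hg : IntegrableOn (fun x : ℝ => x ^ (s - 1)) (Ioc 0 1) := by
      have := intervalIntegral.intervalIntegrable_rpow'
        (show (-1:ℝ) < s - 1 by linarith) (a := 0) (b := 1)
      rwa [intervalIntegrable_iff_integrableOn_Ioc_of_le (by norm_num)] at this
    refine hg.mono' ((hcont.mono Ioc_subset_Ioi_self).aestronglyMeasurable measurableSet_Ioc) ?_
    filter_upwards [ae_restrict_mem measurableSet_Ioc] with x hx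
    simp only [mem_Ioc] at hx
    have h1 : (0:ℝ) ≤ x ^ (s - 1) := Real.rpow_nonneg hx.1.le _
    have h2 : (0:ℝ) ≤ x ^ p := Real.rpow_nonneg hx.1.le _
    rw [Real.norm_eq_abs, abs_of_nonneg (by positivity)]
    calc x ^ (s - 1) / (1 + x ^ p) ≤ x ^ (s - 1) / 1 := by gcongr; linarith
    _ = x ^ (s - 1) := by rw [div_one]
  · have hg : IntegrableOn (fun x : ℝ => x ^ (s - 1 - p)) (Ioi 1) :=
      integrableOn_Ioi_rpow_of_lt (by linarith) one_pos
    refine hg.mono' ((hcont.mono (fun x hx => lt_trans one_pos (show (1:ℝ) < x from hx) : Ioi (1:ℝ) ⊆ Ioi 0)).aestronglyMeasurable measurableSet_Ioi) ?_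
    filter_upwards [ae_restrict_mem measurableSet_Ioi] with x hx
    simp only [mem_Ioi] at hx
    have hx0 : (0:ℝ) < x := by linarith
    have h1 : (0:ℝ) ≤ x ^ (s - 1) := Real.rpow_nonneg hx0.le _
    have h2 : (0:ℝ) < x ^ p := Real.rpow_pos_of_pos hx0 _
    rw [Real.norm_eq_abs, abs_of_nonneg (by positivity)]
    calc x ^ (s - 1) / (1 + x ^ p) ≤ x ^ (s - 1) / x ^ p := by gcongr; linarith
    _ = x ^ (s - 1 - p) := by rw [← Real.rpow_sub hx0]

lemma mellin_aux (p s : ℝ) (hp : 0 < p) (hs : 0 < s) (hsp : s < p) :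
    ∫ x in Ioi (0:ℝ), x ^ (s - 1) / (1 + x ^ p)
      = 1 / p * (Real.Gamma (s / p) * Real.Gamma (1 - s / p)) := by
  have himg : (fun u : ℝ => u ^ (1 / p)) '' Ioi 0 = Ioi 0 := by
    ext y
    constructor
    · rintro ⟨u, hu, rfl⟩
      exact Real.rpow_pos_of_pos hu _
    · intro hy
      simp only [mem_Ioi] at hy
      refine ⟨y ^ p, Real.rpow_pos_of_pos hy _, ?_⟩
      dsimp only
      rw [← Real.rpow_mul hy.le, mul_one_div, div_self hp.ne', Real.rpow_one]
  have hderiv : ∀ u ∈ Ioi (0:ℝ),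
      HasDerivWithinAt (fun u : ℝ => u ^ (1 / p)) (1 / p * u ^ (1 / p - 1)) (Ioi 0) u := by
    intro u hu
    exact (Real.hasDerivAt_rpow_const (Or.inl (ne_of_gt hu))).hasDerivWithinAt
  have hinj : InjOn (fun u : ℝ => u ^ (1 / p)) (Ioi 0) := by
    intro u1 hu1 u2 hu2 h
    simp only [mem_Ioi] at hu1 hu2
    have := congrArg (fun y : ℝ => y ^ p) h
    simpa [← Real.rpow_mul hu1.le, ← Real.rpow_mul hu2.le, one_div,
      inv_mul_cancel₀ hp.ne'] using this
  rw [← himg, integral_image_eq_integral_abs_deriv_smul measurableSet_Ioi hderiv hinj,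
    show (∫ u in Ioi (0:ℝ), |1 / p * u ^ (1 / p - 1)| •
        ((u ^ (1 / p)) ^ (s - 1) / (1 + (u ^ (1 / p)) ^ p)))
      = ∫ u in Ioi (0:ℝ), 1 / p * (u ^ (s / p - 1) / (1 + u)) from ?_,
    MeasureTheory.integral_const_mul, beta_Ioi (s / p) (by positivity)
      ((div_lt_one hp).mpr hsp)]
  apply setIntegral_congr_fun measurableSet_Ioi
  intro u hu
  simp only [mem_Ioi] at hu
  have h1 : (u ^ (1 / p)) ^ p = u := by
    rw [← Real.rpow_mul hu.le, one_div, inv_mul_cancel₀ hp.ne', Real.rpow_one]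
  have h2 : (u ^ (1 / p)) ^ (s - 1) = u ^ ((s - 1) / p) := by
    rw [← Real.rpow_mul hu.le, one_div, inv_mul_eq_div]
  have h3 : (0:ℝ) < u ^ (1 / p - 1) := Real.rpow_pos_of_pos hu _
  simp only [smul_eq_mul, h1, h2, abs_of_pos (by positivity : (0:ℝ) < 1 / p * u ^ (1 / p - 1))]
  rw [show u ^ (s / p - 1) = u ^ (1 / p - 1) * u ^ ((s - 1) / p) by
    rw [← Real.rpow_add hu]; congr 1; field_simp; ring]
  ring

/-- For every real `d ≥ 0`,
`∫_0^∞ (1 + x^d)/(1 + x^(d+2)) dx = 2 Γ((1+d)/(2+d)) Γ((3+d)/(2+d))`. -/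
theorem polynomial_tail_integral (d : ℝ) (hd : 0 ≤ d) :
    ∫ x in Ioi (0 : ℝ), (1 + x ^ d) / (1 + x ^ (d + 2)) =
      2 * Real.Gamma ((1 + d) / (2 + d)) * Real.Gamma ((3 + d) / (2 + d)) := by
  have hp : (0:ℝ) < d + 2 := by linarith
  have step1 : ∫ x in Ioi (0 : ℝ), (1 + x ^ d) / (1 + x ^ (d + 2))
      = ∫ x in Ioi (0 : ℝ), (x ^ ((1:ℝ) - 1) / (1 + x ^ (d + 2))
          + x ^ (d + 1 - 1) / (1 + x ^ (d + 2))) := by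
    apply setIntegral_congr_fun measurableSet_Ioi
    intro x hx
    simp only [mem_Ioi] at hx
    dsimp only
    rw [← add_div, sub_self, Real.rpow_zero, add_sub_cancel_right]
  rw [step1, MeasureTheory.integral_add
      (integrableOn_aux 1 (d + 2) one_pos (by linarith))
      (integrableOn_aux (d + 1) (d + 2) (by linarith) (by linarith)),
    mellin_aux (d + 2) 1 hp one_pos (by linarith),
    mellin_aux (d + 2) (d + 1) hp (by linarith) (by linarith)]
  have e1 : (1:ℝ) - 1 / (d + 2) = (d + 1) / (d + 2) := by field_simp; ring
  have e2 : (1:ℝ) - (d + 1) / (d + 2) = 1 / (d + 2) := by field_simp; ring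
  have e3 : (3 + d) / (2 + d) = 1 / (d + 2) + 1 := by field_simp; ring
  have e4 : (1 + d) / (2 + d) = (d + 1) / (d + 2) := by ring_nf
  rw [e1, e2, e3, e4, Real.Gamma_add_one (by positivity)]
  ring
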